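/- Let d be an even positive integer, δ ≤ d/4 a positive integer, a and L positive integers with d = aL and 1 ≤ a < δ, b > 4, let m_1,…,m_{2δ−1} be the windowed Fourier masks, let 0 < p ≤ q, and set s := e^{−1/b}. Then for all 1 ≤ k ≤ 2δ−1 and 1 ≤ ℓ ≤ L: (i) |⟨S_{ℓa}m_k, x^{±}⟩| ≤ q·(2δ−1)^{−1/4}·s/(1−s); and (ii) if 1 + ℓa ≤ d − δ < δ + ℓa, then | |⟨S_{ℓa}m_k, x⁺⟩| − |⟨S_{ℓa}m_k, x⁻⟩| | ≤ 2p·(2δ−1)^{−1/4}·s/(1−s). -/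

import Mathlib

open scoped BigOperators

noncomputable section

/-- Map an integer to `Fin d` by reduction mod `d` (requires `0 < d`). -/
def intToFin (d : ℕ) (hd : 0 < d) (z : ℤ) : Fin d :=
  ⟨(z % (d : ℤ)).toNat, by
    have h1 : 0 ≤ z % (d : ℤ) := Int.emod_nonneg z (by exact_mod_cast hd.ne')
    have h2 : z % (d : ℤ) < (d : ℤ) := Int.emod_lt_of_pos z (by exact_mod_cast hd)
    omega⟩

/-- Circular shift: `(S_ℓ x)(n) = x(((n + ℓ - 1) mod d) + 1)` in 1-based indexing. -/
def shift {d : ℕ} (ℓ : ℤ) (x : Fin d → ℂ) : Fin d → ℂ :=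
  fun i => x (intToFin d i.pos ((i : ℤ) + ℓ))

/-- `⟨u,v⟩ = ∑ u(n) conj(v(n))`. -/
def innerC {d : ℕ} (u v : Fin d → ℂ) : ℂ := ∑ n, u n * (starRingEnd ℂ) (v n)

/-- `x ∼ x'` iff `x = e^{iθ} x'` for some real `θ`. -/
def phaseEquiv {d : ℕ} (x x' : Fin d → ℂ) : Prop :=
  ∃ θ : ℝ, x = fun n => Complex.exp (θ * Complex.I) * x' n

/-- Euclidean norm on `ℂ^d`. -/
def norm2 {d : ℕ} (x : Fin d → ℂ) : ℝ := Real.sqrt (∑ n, ‖x n‖ ^ 2)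

/-- `D₂(x,x') = min_θ ‖x - e^{iθ} x'‖₂`. -/
def D2 {d : ℕ} (x x' : Fin d → ℂ) : ℝ :=
  ⨅ θ : ℝ, norm2 (fun n => x n - Complex.exp (θ * Complex.I) * x' n)

/-- `C_{p,q} = {x : p ≤ |x(n)| ≤ q for all n}`. -/
def Cpq (d : ℕ) (p q : ℝ) : Set (Fin d → ℂ) :=
  {x | ∀ n, p ≤ ‖x n‖ ∧ ‖x n‖ ≤ q}

/-- `‖m‖_∞ = max_k ‖m_k‖_∞`. -/
def maskSup {d K : ℕ} (m : Fin K → Fin d → ℂ) : ℝ :=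
  ⨆ k, ⨆ n, ‖m k n‖

/-- The measurement map `Z(x)_{k,ℓ} = |⟨S_{ℓa} m_k, x⟩|`, `1 ≤ k ≤ K`, `1 ≤ ℓ ≤ L`. -/
def Zmap {d K : ℕ} (L : ℕ) (m : Fin K → Fin d → ℂ) (a : ℕ) (x : Fin d → ℂ) :
    EuclideanSpace ℝ (Fin K × Fin L) :=
  WithLp.toLp 2 fun kl => ‖innerC (shift ((((kl.2 : ℕ) + 1) * a : ℕ) : ℤ) (m kl.1)) x‖

/-- The measurement map `Y(x)_{k,ℓ} = |⟨S_{ℓa} m_k, x⟩|²`. -/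
def Ymap {d K : ℕ} (L : ℕ) (m : Fin K → Fin d → ℂ) (a : ℕ) (x : Fin d → ℂ) :
    EuclideanSpace ℝ (Fin K × Fin L) :=
  WithLp.toLp 2 fun kl => ‖innerC (shift ((((kl.2 : ℕ) + 1) * a : ℕ) : ℤ) (m kl.1)) x‖ ^ 2

/-- The vectors `x^{±}` (sign `ε = ±1`): `q` on positions `1,…,d/2-δ`, `p` on
`d/2-δ+1,…,d/2`, `±q` on `d/2+1,…,d-δ`, and `p` on `d-δ+1,…,d`. -/
def xpm (d δ : ℕ) (p q ε : ℝ) : Fin d → ℂ :=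
  fun i => if (i : ℕ) < d / 2 - δ then (q : ℂ)
    else if (i : ℕ) < d / 2 then (p : ℂ)
    else if (i : ℕ) < d - δ then ((ε * q : ℝ) : ℂ)
    else (p : ℂ)

/-- The difference of outer products `x x^* - x' x'^*`. -/
def outerDiff {d : ℕ} (x x' : Fin d → ℂ) : Matrix (Fin d) (Fin d) ℂ :=
  Matrix.of fun i j => x i * star (x j) - x' i * star (x' j)

lemma outerDiff_isHermitian {d : ℕ} (x x' : Fin d → ℂ) :
    (outerDiff x x').IsHermitian := by
  unfold Matrix.IsHermitian
  ext i j
  simp [outerDiff, Matrix.conjTranspose_apply, star_sub, star_mul, star_star, mul_comm]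

/-- `d₁(x,x') = ‖x x^* - x' x'^*‖₁`, the sum of the singular values (for a Hermitian
matrix, the sum of the absolute values of its eigenvalues). -/
def d1 {d : ℕ} (x x' : Fin d → ℂ) : ℝ :=
  ∑ i, |(outerDiff_isHermitian x x').eigenvalues i|

/-- The windowed Fourier masks: `m_k(n) = e^{-n/b} (2δ-1)^{-1/4} e^{2πi(k-1)(n-1)/(2δ-1)}`
for `1 ≤ n ≤ δ`, and `0` for `δ < n ≤ d` (the 0-based indices `k, n` stand for `k-1, n-1`). -/
def fourierMask (d δ : ℕ) (b : ℝ) : Fin (2 * δ - 1) → Fin d → ℂ :=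
  fun k n =>
    if (n : ℕ) < δ then
      ((Real.exp (-(((n : ℕ) : ℝ) + 1) / b) * ((2 * δ - 1 : ℕ) : ℝ) ^ (-(1 : ℝ) / 4) : ℝ) : ℂ) *
        Complex.exp (2 * (Real.pi : ℂ) * Complex.I * ((k : ℕ) : ℂ) * ((n : ℕ) : ℂ) /
          ((2 * δ - 1 : ℕ) : ℂ))
    else 0


section Aux

lemma intToFin_natCast (d : ℕ) (hd0 : 0 < d) (n : ℕ) :
    ((intToFin d hd0 (n : ℤ)) : ℕ) = n % d := by
  show (((n : ℤ) % (d : ℤ)).toNat) = n % d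
  rw [← Int.natCast_mod, Int.toNat_natCast]

lemma intToFin_add (d : ℕ) (hd0 : 0 < d) (z w : ℤ) :
    intToFin d hd0 (((intToFin d hd0 z : Fin d) : ℤ) + w) = intToFin d hd0 (z + w) := by
  apply Fin.ext
  show ((((((z % d).toNat : ℕ) : ℤ)) + w) % d).toNat = ((z + w) % d).toNat
  have h1 : ((((z % (d:ℤ)).toNat : ℕ)) : ℤ) = z % d :=
    Int.toNat_of_nonneg (Int.emod_nonneg z (by exact_mod_cast hd0.ne'))
  rw [h1]
  congr 1
  conv_lhs => rw [Int.add_emod, Int.emod_emod_of_dvd z dvd_rfl, ← Int.add_emod]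

lemma intToFin_self (d : ℕ) (hd0 : 0 < d) (i : Fin d) :
    intToFin d hd0 ((i : ℤ)) = i := by
  apply Fin.ext
  show (((i : ℤ) % d).toNat) = (i : ℕ)
  rw [Int.emod_eq_of_lt (by exact_mod_cast Nat.zero_le _) (by exact_mod_cast i.isLt),
    Int.toNat_natCast]

/-- The shift-by-`ℓ` index map as an equivalence. -/
def shiftEquiv (d : ℕ) (hd0 : 0 < d) (ℓ : ℤ) : Fin d ≃ Fin d where
  toFun i := intToFin d hd0 ((i : ℤ) + ℓ)
  invFun j := intToFin d hd0 ((j : ℤ) - ℓ)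
  left_inv i := by
    dsimp only
    rw [show ((intToFin d hd0 ((i : ℤ) + ℓ) : Fin d) : ℤ) - ℓ
        = ((intToFin d hd0 ((i : ℤ) + ℓ) : Fin d) : ℤ) + (-ℓ) by ring,
      intToFin_add, show (i : ℤ) + ℓ + (-ℓ) = (i : ℤ) by ring, intToFin_self]
  right_inv j := by
    dsimp only
    rw [show ((intToFin d hd0 ((j : ℤ) - ℓ) : Fin d) : ℤ) + ℓ
        = ((intToFin d hd0 ((j : ℤ) + (-ℓ)) : Fin d) : ℤ) + ℓ by rw [sub_eq_add_neg],
      intToFin_add, show (j : ℤ) + (-ℓ) + ℓ = (j : ℤ) by ring, intToFin_self]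

lemma mask_abs (d δ : ℕ) (b : ℝ) (k : Fin (2 * δ - 1)) (j : Fin d) :
    ‖fourierMask d δ b k j‖
      = if (j : ℕ) < δ then
          Real.exp (-1 / b) ^ ((j : ℕ) + 1) * ((2 * δ - 1 : ℕ) : ℝ) ^ (-(1 : ℝ) / 4)
        else 0 := by
  unfold fourierMask
  split_ifs with h
  · rw [norm_mul, Complex.norm_real, Real.norm_eq_abs]
    have h1 : (2 * (Real.pi : ℂ) * Complex.I * ((k : ℕ) : ℂ) * ((j : ℕ) : ℂ) /
          ((2 * δ - 1 : ℕ) : ℂ))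
        = ((2 * Real.pi * ((k : ℕ) : ℝ) * ((j : ℕ) : ℝ) / ((2 * δ - 1 : ℕ) : ℝ) : ℝ) : ℂ)
            * Complex.I := by
      push_cast; ring
    rw [h1, Complex.norm_exp_ofReal_mul_I, mul_one]
    have h2 : Real.exp (-(((j : ℕ) : ℝ) + 1) / b) = Real.exp (-1 / b) ^ ((j : ℕ) + 1) := by
      rw [← Real.exp_nat_mul]
      congr 1
      push_cast; ring
    rw [abs_of_nonneg (by positivity), h2]
  · simp

lemma mask_sum_le (d δ : ℕ) (b : ℝ) (hb : 0 < b) (hδd : δ ≤ d) (k : Fin (2 * δ - 1)) :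
    ∑ j : Fin d, ‖fourierMask d δ b k j‖
      ≤ ((2 * δ - 1 : ℕ) : ℝ) ^ (-(1 : ℝ) / 4)
          * (Real.exp (-1 / b) / (1 - Real.exp (-1 / b))) := by
  set s := Real.exp (-1 / b) with hs
  set C := ((2 * δ - 1 : ℕ) : ℝ) ^ (-(1 : ℝ) / 4) with hC
  have hs0 : 0 < s := Real.exp_pos _
  have hs1 : s < 1 := by
    rw [hs, Real.exp_lt_one_iff, neg_div]
    exact neg_lt_zero.mpr (by positivity)
  have hC0 : (0:ℝ) ≤ C := Real.rpow_nonneg (Nat.cast_nonneg _) _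
  have e1 : ∑ j : Fin d, ‖fourierMask d δ b k j‖
      = ∑ t ∈ Finset.range d, (if t < δ then s ^ (t + 1) * C else 0) := by
    rw [← Fin.sum_univ_eq_sum_range (fun t => if t < δ then s ^ (t + 1) * C else 0) d]
    exact Finset.sum_congr rfl fun j _ => mask_abs d δ b k j
  have e2 : ∑ t ∈ Finset.range d, (if t < δ then s ^ (t + 1) * C else 0)
      = ∑ t ∈ Finset.range δ, s ^ (t + 1) * C := by
    rw [← Finset.sum_filter]
    congr 1
    ext t
    simp only [Finset.mem_filter, Finset.mem_range]
    omega
  have e3 : ∑ t ∈ Finset.range δ, s ^ (t + 1) * C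
      = (∑ t ∈ Finset.range δ, s ^ t) * (s * C) := by
    rw [Finset.sum_mul]
    exact Finset.sum_congr rfl fun t _ => by ring
  have hgeom : ∑ t ∈ Finset.range δ, s ^ t ≤ 1 / (1 - s) := by
    have h1s : (0:ℝ) < 1 - s := by linarith
    have hmul : (∑ t ∈ Finset.range δ, s ^ t) * (1 - s) = 1 - s ^ δ := by
      calc (∑ t ∈ Finset.range δ, s ^ t) * (1 - s)
          = -((∑ t ∈ Finset.range δ, s ^ t) * (s - 1)) := by ring
        _ = 1 - s ^ δ := by rw [geom_sum_mul]; ring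
    rw [le_div_iff₀ h1s, hmul]
    have : (0:ℝ) ≤ s ^ δ := by positivity
    linarith
  rw [e1, e2, e3]
  calc (∑ t ∈ Finset.range δ, s ^ t) * (s * C)
      ≤ (1 / (1 - s)) * (s * C) :=
        mul_le_mul_of_nonneg_right hgeom (by positivity)
    _ = C * (s / (1 - s)) := by ring

lemma key_bound (d δ : ℕ) (b : ℝ) (hd0 : 0 < d) (hδd : δ ≤ d) (hb : 0 < b)
    (k : Fin (2 * δ - 1)) (ℓ : ℤ) (x : Fin d → ℂ) (M : ℝ) (hM : 0 ≤ M)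
    (hx : ∀ i : Fin d, ((intToFin d hd0 ((i : ℤ) + ℓ) : Fin d) : ℕ) < δ →
      ‖x i‖ ≤ M) :
    ‖innerC (shift ℓ (fourierMask d δ b k)) x‖
      ≤ M * (((2 * δ - 1 : ℕ) : ℝ) ^ (-(1 : ℝ) / 4)
          * (Real.exp (-1 / b) / (1 - Real.exp (-1 / b)))) := by
  unfold innerC shift
  refine le_trans (norm_sum_le _ _) ?_
  have step : ∀ i : Fin d,
      ‖fourierMask d δ b k (intToFin d i.pos ((i : ℤ) + ℓ))
          * (starRingEnd ℂ) (x i)‖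
        ≤ ‖fourierMask d δ b k (intToFin d hd0 ((i : ℤ) + ℓ))‖ * M := by
    intro i
    rw [norm_mul, Complex.norm_conj]
    by_cases h : ((intToFin d hd0 ((i : ℤ) + ℓ) : Fin d) : ℕ) < δ
    · exact mul_le_mul_of_nonneg_left (hx i h) (norm_nonneg _)
    · have hm : fourierMask d δ b k (intToFin d hd0 ((i : ℤ) + ℓ)) = 0 := by
        unfold fourierMask
        rw [if_neg h]
      rw [hm]
      simp
  refine le_trans (Finset.sum_le_sum (fun i _ => step i)) ?_
  rw [← Finset.sum_mul, mul_comm]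
  apply mul_le_mul_of_nonneg_left ?_ hM
  have hbij : ∑ i : Fin d, ‖fourierMask d δ b k (intToFin d hd0 ((i : ℤ) + ℓ))‖
      = ∑ j : Fin d, ‖fourierMask d δ b k j‖ :=
    Equiv.sum_comp (shiftEquiv d hd0 ℓ) (fun j => ‖fourierMask d δ b k j‖)
  rw [hbij]
  exact mask_sum_le d δ b hb hδd k

lemma xpm_abs_le (d δ : ℕ) (p q ε : ℝ) (hp : 0 ≤ p) (hpq : p ≤ q) (hε : |ε| = 1)
    (i : Fin d) : ‖xpm d δ p q ε i‖ ≤ q := by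
  have hq : (0:ℝ) ≤ q := hp.trans hpq
  unfold xpm
  split_ifs <;> rw [Complex.norm_real, Real.norm_eq_abs]
  · rw [abs_of_nonneg hq]
  · rw [abs_of_nonneg hp]; exact hpq
  · rw [abs_mul, hε, one_mul, abs_of_nonneg hq]
  · rw [abs_of_nonneg hp]; exact hpq

end Aux


/-- With `s = e^{-1/b}`: (i) every windowed Fourier measurement of `x^±`
is at most `q (2δ-1)^{-1/4} s/(1-s)`; (ii) if `1 + ℓa ≤ d - δ < δ + ℓa` then the
measurements of `x⁺` and `x⁻` differ by at most `2p (2δ-1)^{-1/4} s/(1-s)`.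
(Here `k, ℓ` stand for the 1-based indices `k+1, ℓ+1`.) -/
theorem fourier_entrywise (d δ a L : ℕ) (b p q : ℝ)
    (hd0 : 0 < d) (hd : Even d) (hδ : 0 < δ) (hδd : 4 * δ ≤ d)
    (ha : 0 < a) (hL : 0 < L) (hdaL : d = a * L) (haδ : a < δ)
    (hb : 4 < b) (hp : 0 < p) (hpq : p ≤ q) :
    ∀ (k : Fin (2 * δ - 1)) (ℓ : Fin L),
      (‖innerC (shift ((((ℓ : ℕ) + 1) * a : ℕ) : ℤ)
            (fourierMask d δ b k)) (xpm d δ p q 1)‖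
          ≤ q * ((2 * δ - 1 : ℕ) : ℝ) ^ (-(1 : ℝ) / 4)
              * (Real.exp (-1 / b) / (1 - Real.exp (-1 / b)))) ∧
      (‖innerC (shift ((((ℓ : ℕ) + 1) * a : ℕ) : ℤ)
            (fourierMask d δ b k)) (xpm d δ p q (-1))‖
          ≤ q * ((2 * δ - 1 : ℕ) : ℝ) ^ (-(1 : ℝ) / 4)
              * (Real.exp (-1 / b) / (1 - Real.exp (-1 / b)))) ∧
      ((1 + ((ℓ : ℕ) + 1) * a ≤ d - δ ∧ d - δ < δ + ((ℓ : ℕ) + 1) * a) →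
        |‖innerC (shift ((((ℓ : ℕ) + 1) * a : ℕ) : ℤ)
              (fourierMask d δ b k)) (xpm d δ p q 1)‖
            - ‖innerC (shift ((((ℓ : ℕ) + 1) * a : ℕ) : ℤ)
              (fourierMask d δ b k)) (xpm d δ p q (-1))‖|
          ≤ 2 * p * ((2 * δ - 1 : ℕ) : ℝ) ^ (-(1 : ℝ) / 4)
              * (Real.exp (-1 / b) / (1 - Real.exp (-1 / b)))) := by
  intro k ℓ
  have hb0 : (0:ℝ) < b := by linarith
  have hδd' : δ ≤ d := by omega
  have hq0 : (0:ℝ) ≤ q := hp.le.trans hpq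
  set s := Real.exp (-1 / b) with hs
  set C := ((2 * δ - 1 : ℕ) : ℝ) ^ (-(1 : ℝ) / 4) with hC
  have hs0 : 0 < s := Real.exp_pos _
  have hs1 : s < 1 := by
    rw [hs, Real.exp_lt_one_iff, neg_div]
    exact neg_lt_zero.mpr (by positivity)
  have hC0 : (0:ℝ) ≤ C := Real.rpow_nonneg (Nat.cast_nonneg _) _
  set w : ℕ := ((ℓ : ℕ) + 1) * a with hw
  have part1 : ∀ ε : ℝ, |ε| = 1 →
      ‖innerC (shift ((w : ℕ) : ℤ) (fourierMask d δ b k)) (xpm d δ p q ε)‖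
        ≤ q * C * (s / (1 - s)) := by
    intro ε hε
    calc ‖innerC (shift ((w : ℕ) : ℤ) (fourierMask d δ b k)) (xpm d δ p q ε)‖
        ≤ q * (C * (s / (1 - s))) :=
          key_bound d δ b hd0 hδd' hb0 k _ _ q hq0
            (fun i _ => xpm_abs_le d δ p q ε hp.le hpq hε i)
      _ = q * C * (s / (1 - s)) := by ring
  refine ⟨part1 1 (by norm_num), part1 (-1) (by norm_num), ?_⟩
  rintro ⟨h1, h2⟩
  have hwd : w + δ + 1 ≤ d := by omega
  have hwlow : d < 2 * δ + w := by omega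
  have hsupp : ∀ i : Fin d, ((intToFin d hd0 ((i : ℤ) + ((w : ℕ) : ℤ)) : Fin d) : ℕ) < δ →
      d - w ≤ (i : ℕ) ∧ (i : ℕ) < d - w + δ := by
    intro i h
    rw [show (i : ℤ) + ((w : ℕ) : ℤ) = (((i : ℕ) + w : ℕ) : ℤ) by push_cast; ring,
      intToFin_natCast] at h
    have hi : (i : ℕ) < d := i.isLt
    have hmod : ((i : ℕ) + w) % d = if (i : ℕ) + w < d then (i : ℕ) + w
        else (i : ℕ) + w - d := by
      split_ifs with h'
      · exact Nat.mod_eq_of_lt h'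
      · rw [Nat.mod_eq_sub_mod (le_of_not_gt h')]
        exact Nat.mod_eq_of_lt (by omega)
    rw [hmod] at h
    split_ifs at h <;> omega
  by_cases hcase : d - w + δ ≤ d / 2
  · have heq : innerC (shift ((w : ℕ) : ℤ) (fourierMask d δ b k)) (xpm d δ p q 1)
        = innerC (shift ((w : ℕ) : ℤ) (fourierMask d δ b k)) (xpm d δ p q (-1)) := by
      unfold innerC
      refine Finset.sum_congr rfl fun i _ => ?_
      by_cases h : ((intToFin d hd0 ((i : ℤ) + ((w : ℕ) : ℤ)) : Fin d) : ℕ) < δ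
      · have hi := hsupp i h
        have hd2 : 2 * (d / 2) = d := Nat.two_mul_div_two_of_even hd
        have hxx : xpm d δ p q 1 i = xpm d δ p q (-1) i := by
          unfold xpm
          have hlt : (i : ℕ) < d / 2 := by omega
          split_ifs <;> first | rfl | omega
        rw [hxx]
      · have hm : fourierMask d δ b k (intToFin d hd0 ((i : ℤ) + ((w : ℕ) : ℤ))) = 0 := by
          unfold fourierMask
          rw [if_neg h]
        have hm' : shift ((w : ℕ) : ℤ) (fourierMask d δ b k) i = 0 := hm
        rw [hm', zero_mul, zero_mul]
    rw [heq, sub_self, abs_zero]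
    have hnn : (0:ℝ) ≤ 2 * p * C * (s / (1 - s)) := by
      apply mul_nonneg (mul_nonneg (by linarith) hC0) (div_nonneg hs0.le (by linarith))
    exact hnn
  · push_neg at hcase
    set A := innerC (shift ((w : ℕ) : ℤ) (fourierMask d δ b k)) (xpm d δ p q 1) with hA
    set B := innerC (shift ((w : ℕ) : ℤ) (fourierMask d δ b k)) (xpm d δ p q (-1)) with hB
    have h3 : |‖A‖ - ‖B‖| ≤ ‖A + B‖ := by
      have := abs_norm_sub_norm_le A (-B)
      rwa [norm_neg, sub_neg_eq_add] at this
    have hAB : A + B = innerC (shift ((w : ℕ) : ℤ) (fourierMask d δ b k))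
        (fun i => xpm d δ p q 1 i + xpm d δ p q (-1) i) := by
      rw [hA, hB]
      unfold innerC
      rw [← Finset.sum_add_distrib]
      exact Finset.sum_congr rfl fun i _ => by rw [map_add, mul_add]
    have hd2 : 2 * (d / 2) = d := Nat.two_mul_div_two_of_even hd
    have hxsum : ∀ i : Fin d,
        ((intToFin d hd0 ((i : ℤ) + ((w : ℕ) : ℤ)) : Fin d) : ℕ) < δ →
        ‖xpm d δ p q 1 i + xpm d δ p q (-1) i‖ ≤ 2 * p := by
      intro i h
      have hi := hsupp i h
      have hlow : d / 2 - δ < (i : ℕ) := by omega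
      unfold xpm
      split_ifs with hc1 hc2 hc3
      · omega
      · rw [show ((p:ℝ) : ℂ) + ((p:ℝ) : ℂ) = ((2 * p : ℝ) : ℂ) by push_cast; ring,
          Complex.norm_real, Real.norm_eq_abs, abs_of_nonneg (by linarith)]
      · rw [show (((1 * q : ℝ) : ℂ)) + (((-1) * q : ℝ) : ℂ) = 0 by push_cast; ring,
          norm_zero]
        linarith
      · rw [show ((p:ℝ) : ℂ) + ((p:ℝ) : ℂ) = ((2 * p : ℝ) : ℂ) by push_cast; ring,
          Complex.norm_real, Real.norm_eq_abs, abs_of_nonneg (by linarith)]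
    calc |‖A‖ - ‖B‖| ≤ ‖A + B‖ := h3
      _ ≤ (2 * p) * (C * (s / (1 - s))) := by
          rw [hAB]
          exact key_bound d δ b hd0 hδd' hb0 k _ _ (2 * p) (by linarith) hxsum
      _ = 2 * p * C * (s / (1 - s)) := by ring
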